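/- Let 0 < λ_min ≤ λ_max and 0 ≤ ε_c < ε. Assume f* : ℝ^n → ℝ is finite everywhere and differentiable, that for every u ∈ ℝ^n the supremum defining f*(u) is attained at ∇f*(u), and that f* is V-smooth for some V : ℝ^n → [0, ∞) with V(0) = 0. Let λ_0 = λ_max > λ_1 > ⋯ > λ_{T−1} > 0 with λ_{T−1} ≤ λ_min, generated by λ_{t+1} = λ_t(1 − ρ_t) where ρ_t ∈ [0, 1), and let (β_t, θ_t) ∈ ℝ^p × ℝ^n for t = 0, …, T−1 satisfy: Ω(β_t) and Ω*(X^⊤θ_t) are finite, Gap_t ≤ ε_c, and Q_{t,V}(ρ') ≤ ε for all ρ' ∈ [0, ρ_t]. Then {β_0, …, β_{T−1}} is an ε-path for [λ_min, λ_max]. -/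

import Mathlib

open scoped RealInnerProductSpace

noncomputable section

abbrev Vec (d : ℕ) := EuclideanSpace ℝ (Fin d)

/-- Matrix–vector product, landing in Euclidean space. -/
def mv {a b : ℕ} (M : Matrix (Fin a) (Fin b) ℝ) (v : Vec b) : Vec a := WithLp.toLp 2 (M.mulVec v)

/-- Fenchel conjugate of a real-valued function, with values in `EReal`. -/
noncomputable def rconj {d : ℕ} (f : Vec d → ℝ) (u : Vec d) : EReal :=
  ⨆ x, ((⟪u, x⟫ - f x : ℝ) : EReal)

/-- Fenchel conjugate of an `EReal`-valued function. -/
noncomputable def econj {d : ℕ} (g : Vec d → EReal) (u : Vec d) : EReal :=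
  ⨆ x, (((⟪u, x⟫ : ℝ) : EReal) - g x)

/-- Primal objective `P_λ(β) = f(Xβ) + λ Ω(β)`, with values in `EReal`. -/
noncomputable def Pfun {n p : ℕ} (X : Matrix (Fin n) (Fin p) ℝ)
    (f : Vec n → ℝ) (Ω : Vec p → EReal) (lam : ℝ) (b : Vec p) : EReal :=
  ((f (mv X b) : ℝ) : EReal) + ((lam : ℝ) : EReal) * Ω b

/-- `β` is an `ε`-solution for `λ`: `P_λ(β) - inf P_λ ≤ ε`. -/
noncomputable def epsSolution {n p : ℕ} (X : Matrix (Fin n) (Fin p) ℝ)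
    (f : Vec n → ℝ) (Ω : Vec p → EReal) (lam ε : ℝ) (β : Vec p) : Prop :=
  Pfun X f Ω lam β - (⨅ b, Pfun X f Ω lam b) ≤ (ε : EReal)

lemma inner_tr {n p : ℕ} (X : Matrix (Fin n) (Fin p) ℝ) (θ : Vec n) (c : Vec p) :
    ⟪mv X.transpose θ, c⟫ = ⟪θ, mv X c⟫ := by
  simp only [mv, PiLp.inner_apply, RCLike.inner_apply, conj_trivial, Matrix.mulVec,
    dotProduct, PiLp.toLp_apply, Finset.sum_mul, Finset.mul_sum, Matrix.transpose_apply]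
  rw [Finset.sum_comm]
  exact Finset.sum_congr rfl fun i _ => Finset.sum_congr rfl fun j _ => by ring

lemma weakDuality {n p : ℕ} (X : Matrix (Fin n) (Fin p) ℝ)
    (f : Vec n → ℝ) (Ω : Vec p → EReal) (fstar : Vec n → ℝ)
    (hconj : ∀ u, rconj f u = ((fstar u : ℝ) : EReal))
    (l : ℝ) (hl : 0 < l) (b : Vec p) (θ : Vec n) (wb ws ε : ℝ)
    (hΩb : Ω b = ((wb : ℝ) : EReal))
    (hΩs : econj Ω (mv X.transpose θ) = ((ws : ℝ) : EReal))
    (hG : f (mv X b) + fstar ((-l) • θ) + l * (wb + ws) ≤ ε) :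
    epsSolution X f Ω l ε b := by
  have hfst : ∀ x : Vec n, ⟪(-l) • θ, x⟫ - f x ≤ fstar ((-l) • θ) := by
    intro x
    have h1 : ((⟪(-l) • θ, x⟫ - f x : ℝ) : EReal) ≤ rconj f ((-l) • θ) :=
      le_iSup (fun x => ((⟪(-l) • θ, x⟫ - f x : ℝ) : EReal)) x
    rw [hconj] at h1
    exact EReal.coe_le_coe_iff.mp h1
  have hΩle : ∀ c : Vec p, ((⟪mv X.transpose θ, c⟫ : ℝ) : EReal) - Ω c ≤ ((ws : ℝ) : EReal) := by
    intro c
    have := le_iSup (fun c => ((⟪mv X.transpose θ, c⟫ : ℝ) : EReal) - Ω c) c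
    rwa [show (⨆ c, ((⟪mv X.transpose θ, c⟫ : ℝ) : EReal) - Ω c) = econj Ω (mv X.transpose θ) from rfl, hΩs] at this
  have hlow : ∀ c : Vec p, ((- fstar ((-l) • θ) - l * ws : ℝ) : EReal) ≤ Pfun X f Ω l c := by
    intro c
    have hnb : Ω c ≠ ⊥ := by
      intro hb
      have := hΩle c
      rw [hb] at this
      simp at this
    rcases eq_top_or_lt_top (Ω c) with htop | hlt
    · rw [Pfun, htop]
      rw [EReal.coe_mul_top_of_pos hl]
      simp
    · lift Ω c to ℝ using ⟨hlt.ne, hnb⟩ with w hw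
      have h2 : ⟪mv X.transpose θ, c⟫ - w ≤ ws := by
        have h := hΩle c
        rw [← hw, ← EReal.coe_sub] at h
        exact EReal.coe_le_coe_iff.mp h
      have h1 := hfst (mv X c)
      rw [real_inner_smul_left] at h1
      rw [inner_tr] at h2
      have : - fstar ((-l) • θ) - l * ws ≤ f (mv X c) + l * w := by nlinarith
      rw [Pfun, ← hw, ← EReal.coe_mul, ← EReal.coe_add]
      exact EReal.coe_le_coe_iff.mpr this
  have hinf : ((- fstar ((-l) • θ) - l * ws : ℝ) : EReal) ≤ ⨅ c, Pfun X f Ω l c := le_iInf hlow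
  have hP : Pfun X f Ω l b = ((f (mv X b) + l * wb : ℝ) : EReal) := by
    rw [Pfun, hΩb, ← EReal.coe_mul, ← EReal.coe_add]
  rw [epsSolution, hP]
  calc ((f (mv X b) + l * wb : ℝ) : EReal) - (⨅ c, Pfun X f Ω l c)
      ≤ ((f (mv X b) + l * wb : ℝ) : EReal) - ((- fstar ((-l) • θ) - l * ws : ℝ) : EReal) :=
        EReal.sub_le_sub le_rfl hinf
    _ ≤ (ε : EReal) := by
        rw [← EReal.coe_sub, EReal.coe_le_coe_iff]
        linarith [hG]

/-- unilateral approximation path is an `ε`-path.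
`f*` is everywhere finite (real values `fstar`), differentiable with gradient `fstar'`
at which its defining supremum is attained, and `V`-smooth.  The grid
`λ_0 = λ_max > ⋯ > λ_{T-1} > 0`, `λ_{T-1} ≤ λ_min`, is generated by
`λ_{t+1} = λ_t (1 - ρ_t)` with `ρ_t ∈ [0,1)`; the pairs `(β_t, θ_t)` have finite
`Ω(β_t)`, `Ω*(Xᵀθ_t)`, satisfy `Gap_t ≤ ε_c < ε` and `Q_{t,V}(ρ') ≤ ε` for all
`ρ' ∈ [0, ρ_t]`.  Then `{β_0, …, β_{T-1}}` is an `ε`-path for `[λ_min, λ_max]`. -/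
theorem stmt11 {n p : ℕ} (X : Matrix (Fin n) (Fin p) ℝ)
    (f : Vec n → ℝ) (hconv : ConvexOn ℝ Set.univ f)
    (Ω : Vec p → EReal)
    (fstar : Vec n → ℝ)
    (hconj : ∀ u, rconj f u = ((fstar u : ℝ) : EReal))
    (fstar' : Vec n → Vec n)
    (hdiff : ∀ u, HasGradientAt fstar (fstar' u) u)
    (hatt : ∀ u, fstar u = ⟪u, fstar' u⟫ - f (fstar' u))
    (V : Vec n → ℝ) (hV0 : V 0 = 0) (hVnn : ∀ v, 0 ≤ V v)
    (hsm : ∀ x z : Vec n, fstar z - fstar x - ⟪fstar' x, z - x⟫ ≤ V (z - x))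
    (lammin lammax : ℝ) (hmin : 0 < lammin) (hminmax : lammin ≤ lammax)
    (ε εc : ℝ) (hεc : 0 ≤ εc) (hεcε : εc < ε)
    (T : ℕ) (hT : 1 ≤ T)
    (lam rho : ℕ → ℝ)
    (hlam0 : lam 0 = lammax)
    (hpos : ∀ t < T, 0 < lam t)
    (hdec : ∀ t, t + 1 < T → lam (t + 1) < lam t)
    (hgen : ∀ t, t + 1 < T → lam (t + 1) = lam t * (1 - rho t))
    (hrho : ∀ t, t + 1 < T → 0 ≤ rho t ∧ rho t < 1)
    (hlast : lam (T - 1) ≤ lammin)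
    (β : ℕ → Vec p) (θ : ℕ → Vec n) (Ωβ Ωs : ℕ → ℝ)
    (hΩβ : ∀ t < T, Ω (β t) = ((Ωβ t : ℝ) : EReal))
    (hΩs : ∀ t < T, econj Ω (mv X.transpose (θ t)) = ((Ωs t : ℝ) : EReal))
    (hGap : ∀ t < T,
      f (mv X (β t)) + fstar ((-(lam t)) • θ t) + lam t * (Ωβ t + Ωs t) ≤ εc)
    (hQ : ∀ t, t + 1 < T → ∀ ρ' ∈ Set.Icc (0 : ℝ) (rho t),
      (f (mv X (β t)) + fstar ((-(lam t)) • θ t) + lam t * (Ωβ t + Ωs t))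
        + ρ' * ((f (mv X (β t)) - f (fstar' ((-(lam t)) • θ t)))
            - (f (mv X (β t)) + fstar ((-(lam t)) • θ t) + lam t * (Ωβ t + Ωs t)))
        + V ((-ρ') • ((-(lam t)) • θ t)) ≤ ε) :
    ∀ l ∈ Set.Icc lammin lammax, ∃ t < T, epsSolution X f Ω l ε (β t) := by
  classical
  intro l hl
  obtain ⟨hl1, hl2⟩ := hl
  have key : ∀ t, t < T → ∀ ρ' : ℝ,
      fstar ((1 - ρ') • ((-(lam t)) • θ t)) ≤
        fstar ((-(lam t)) • θ t)
          - ρ' * (fstar ((-(lam t)) • θ t) + f (fstar' ((-(lam t)) • θ t)))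
          + V ((-ρ') • ((-(lam t)) • θ t)) := by
    intro t ht ρ'
    set ζ := (-(lam t)) • θ t with hζdef
    have hs := hsm ζ ((1 - ρ') • ζ)
    have hz : (1 - ρ') • ζ - ζ = (-ρ') • ζ := by module
    rw [hz, real_inner_smul_right] at hs
    have hI : ⟪fstar' ζ, ζ⟫ = fstar ζ + f (fstar' ζ) := by
      rw [real_inner_comm]; linarith [hatt ζ]
    rw [hI] at hs
    nlinarith [hs]
  have main : ∀ t, t + 1 < T → ∀ l', lam (t+1) ≤ l' → l' ≤ lam t →
      epsSolution X f Ω l' ε (β t) := by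
    intro t ht l' hll hlu
    have htT : t < T := by omega
    have hpt : 0 < lam t := hpos t htT
    have hpt1 : 0 < lam (t+1) := hpos (t+1) ht
    have hl'pos : 0 < l' := lt_of_lt_of_le hpt1 hll
    set ρ' : ℝ := 1 - l' / lam t with hρdef
    have hdiv : l' / lam t ≤ 1 := (div_le_one hpt).mpr hlu
    have hρ0 : 0 ≤ ρ' := by rw [hρdef]; linarith
    have hρr : ρ' ≤ rho t := by
      have hg : lam t * (1 - rho t) ≤ l' := by rw [← hgen t ht]; exact hll
      have : 1 - rho t ≤ l' / lam t := by
        rw [le_div_iff₀ hpt]; nlinarith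
      rw [hρdef]; linarith
    have hleq : l' = lam t * (1 - ρ') := by
      rw [hρdef]
      field_simp
      ring
    have hζ : (-(l')) • θ t = (1 - ρ') • ((-(lam t)) • θ t) := by
      rw [smul_smul]
      congr 1
      rw [hleq]; ring
    apply weakDuality X f Ω fstar hconj l' hl'pos (β t) (θ t) (Ωβ t) (Ωs t) ε
      (hΩβ t htT) (hΩs t htT)
    rw [hζ]
    have hk := key t htT ρ'
    have hq := hQ t ht ρ' ⟨hρ0, hρr⟩
    rw [hleq]
    nlinarith [hk, hq]
  have direct : ∀ t, t < T → epsSolution X f Ω (lam t) ε (β t) := by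
    intro t ht
    apply weakDuality X f Ω fstar hconj (lam t) (hpos t ht) (β t) (θ t) (Ωβ t) (Ωs t) ε
      (hΩβ t ht) (hΩs t ht)
    exact le_trans (hGap t ht) hεcε.le
  by_cases hT1 : T = 1
  · refine ⟨0, by omega, ?_⟩
    have h0 : lam 0 ≤ lammin := by
      have := hlast
      rw [hT1] at this
      simpa using this
    have hle : l = lam 0 := le_antisymm (hlam0 ▸ hl2) (le_trans h0 hl1)
    rw [hle]
    exact direct 0 (by omega)
  · have hex : ∃ t, t < T ∧ lam t ≤ l := ⟨T - 1, by omega, le_trans hlast hl1⟩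
    have hm := Nat.find_spec hex
    cases hfind : Nat.find hex with
    | zero =>
        rw [hfind] at hm
        have hle : l = lam 0 := le_antisymm (hlam0 ▸ hl2) hm.2
        exact ⟨0, by omega, hle ▸ direct 0 (by omega)⟩
    | succ k =>
        rw [hfind] at hm
        have hk := Nat.find_min hex (m := k) (by omega)
        push_neg at hk
        have hkT : k < T := by omega
        have hlk : l < lam k := hk hkT
        exact ⟨k, by omega, main k hm.1 l hm.2 hlk.le⟩


end
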